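/- The Lobachevsky function Λ(x) = −∫₀ˣ log|2 sin t| dt is concave on the interval [0, π/2]. -/

import Mathlib

open Real

/-- The Lobachevsky function `Λ(x) = -∫₀ˣ log |2 sin t| dt`. -/
noncomputable def lobachevsky (x : ℝ) : ℝ :=
  -∫ t in (0:ℝ)..x, Real.log |2 * Real.sin t|

lemma intervalIntegrable_log_zero_one :
    IntervalIntegrable Real.log MeasureTheory.volume 0 1 := by
  have h : IntervalIntegrable (fun t : ℝ => -Real.log t) MeasureTheory.volume 0 1 := by
    apply intervalIntegral.intervalIntegrable_deriv_of_nonneg (g := fun t : ℝ => t - t * Real.log t)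
    · exact (continuous_id.sub continuous_mul_log).continuousOn
    · intro x hx
      simp only [min_eq_left, max_eq_right, zero_le_one] at hx
      have hx0 : x ≠ 0 := ne_of_gt hx.1
      have := (hasDerivAt_id x).sub (Real.hasDerivAt_mul_log hx0)
      rw [show -Real.log x = 1 - (Real.log x + 1) by ring]
      exact this
    · intro x hx
      simp only [min_eq_left, max_eq_right, zero_le_one] at hx
      simp only [neg_nonneg]
      exact Real.log_nonpos hx.1.le hx.2.le
  have h2 := h.neg
  have : (-fun t : ℝ => -Real.log t) = Real.log := by funext t; simp
  rwa [this] at h2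

lemma intervalIntegrable_log_zero (x : ℝ) (hx : 0 ≤ x) :
    IntervalIntegrable Real.log MeasureTheory.volume 0 x := by
  rcases le_total x 1 with h | h
  · exact intervalIntegrable_log_zero_one.mono_set
      (Set.uIcc_subset_uIcc_iff_le.2 ⟨by simp [hx], by simp [hx, h]⟩)
  · refine intervalIntegrable_log_zero_one.trans (intervalIntegral.intervalIntegrable_log ?_)
    rw [Set.uIcc_of_le h]
    intro hmem
    exact absurd hmem.1 (by norm_num)

lemma intervalIntegrable_log_two_sin :
    IntervalIntegrable (fun t => Real.log |2 * Real.sin t|) MeasureTheory.volume 0 (π / 2) := by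
  have hpi : 0 < π := Real.pi_pos
  have hbound : IntervalIntegrable (fun t : ℝ => |Real.log t| + 1) MeasureTheory.volume 0 (π / 2) :=
    ((intervalIntegrable_log_zero _ (by positivity)).abs).add intervalIntegrable_const
  refine hbound.mono_fun ?_ ?_
  · exact (Real.measurable_log.comp
      ((measurable_const.mul Real.measurable_sin).abs)).aestronglyMeasurable
  · rw [Filter.EventuallyLE, MeasureTheory.ae_restrict_iff' measurableSet_uIoc]
    refine MeasureTheory.ae_of_all _ fun t ht => ?_
    rw [Set.uIoc_of_le (by positivity)] at ht
    obtain ⟨ht0, ht2⟩ := ht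
    have hsin : 0 < Real.sin t := Real.sin_pos_of_pos_of_lt_pi ht0
      (lt_of_le_of_lt ht2 (by linarith))
    have hupper : 2 * Real.sin t ≤ 2 * t := by
      have := Real.sin_le ht0.le
      linarith
    have hlower : t ≤ 2 * Real.sin t := by
      have h1 : 2 / π * t ≤ Real.sin t := Real.mul_le_sin ht0.le ht2
      have h2 : t ≤ 2 * (2 / π * t) := by
        have h14 : 1 ≤ 4 / π := (one_le_div hpi).2 Real.pi_le_four
        calc t = 1 * t := (one_mul t).symm
          _ ≤ 4 / π * t := mul_le_mul_of_nonneg_right h14 ht0.le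
          _ = 2 * (2 / π * t) := by ring
      linarith
    have habs : |2 * Real.sin t| = 2 * Real.sin t := abs_of_pos (by linarith)
    simp only [norm_eq_abs, habs]
    have h2t : (0:ℝ) < 2 * t := by linarith
    have hle1 : Real.log (2 * Real.sin t) ≤ Real.log t + 1 := by
      calc Real.log (2 * Real.sin t) ≤ Real.log (2 * t) :=
            Real.log_le_log (by linarith) hupper
        _ = Real.log 2 + Real.log t := Real.log_mul two_ne_zero (ne_of_gt ht0)
        _ ≤ Real.log t + 1 := by
            have : Real.log 2 ≤ 1 := by
              rw [← Real.log_exp 1]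
              exact Real.log_le_log two_pos
                (by linarith [Real.add_one_le_exp 1])
            linarith
    have hge1 : Real.log t ≤ Real.log (2 * Real.sin t) :=
      Real.log_le_log ht0 hlower
    rw [abs_of_nonneg (by positivity : (0:ℝ) ≤ |Real.log t| + 1)]
    rw [abs_le]
    constructor
    · have := neg_abs_le (Real.log t)
      linarith
    · have := le_abs_self (Real.log t)
      linarith

lemma lobachevsky_hasDerivAt {x : ℝ} (hx : x ∈ Set.Ioo 0 (π / 2)) :
    HasDerivAt lobachevsky (-Real.log |2 * Real.sin x|) x := by
  have hint : IntervalIntegrable (fun t => Real.log |2 * Real.sin t|)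
      MeasureTheory.volume 0 x :=
    intervalIntegrable_log_two_sin.mono_set
      (Set.uIcc_subset_uIcc_iff_le.2 ⟨by simp [hx.1.le, Real.pi_pos.le, le_of_lt],
        by simp [hx.1.le, hx.2.le, Real.pi_pos.le]⟩)
  have hsin : 0 < Real.sin x := Real.sin_pos_of_pos_of_lt_pi hx.1
    (lt_trans hx.2 (by linarith [Real.pi_pos]))
  have hcont : ContinuousAt (fun t => Real.log |2 * Real.sin t|) x := by
    apply ContinuousAt.log
    · exact ((continuous_const.mul Real.continuous_sin).abs).continuousAt
    · simp only [abs_ne_zero]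
      positivity
  have := intervalIntegral.integral_hasDerivAt_right hint
    ((Real.measurable_log.comp
      ((measurable_const.mul Real.measurable_sin).abs)).aestronglyMeasurable.stronglyMeasurableAtFilter)
    hcont
  exact this.neg

/-- The Lobachevsky function is concave on the interval `[0, π/2]`. -/
theorem lobachevsky_concaveOn :
    ConcaveOn ℝ (Set.Icc 0 (Real.pi / 2)) lobachevsky := by
  have hpi : 0 < π := Real.pi_pos
  have hIoo : interior (Set.Icc (0:ℝ) (π / 2)) = Set.Ioo 0 (π / 2) := interior_Icc
  apply AntitoneOn.concaveOn_of_deriv (convex_Icc _ _)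
  · -- continuity
    have : ContinuousOn (fun x => ∫ t in (0:ℝ)..x, Real.log |2 * Real.sin t|)
        (Set.Icc 0 (π / 2)) := by
      have := intervalIntegral.continuousOn_primitive_interval'
        (intervalIntegrable_log_two_sin) (a := 0) (Set.left_mem_uIcc)
      rwa [Set.uIcc_of_le (by positivity)] at this
    exact this.neg
  · rw [hIoo]
    exact fun x hx => (lobachevsky_hasDerivAt hx).differentiableAt.differentiableWithinAt
  · rw [hIoo]
    intro x hx y hy hxy
    rw [(lobachevsky_hasDerivAt hx).deriv, (lobachevsky_hasDerivAt hy).deriv]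
    have hsx : 0 < Real.sin x := Real.sin_pos_of_pos_of_lt_pi hx.1 (by linarith [hx.2])
    have hsy : 0 < Real.sin y := Real.sin_pos_of_pos_of_lt_pi hy.1 (by linarith [hy.2])
    have hmono : Real.sin x ≤ Real.sin y := by
      apply Real.sin_le_sin_of_le_of_le_pi_div_two (by linarith [hx.1]) hy.2.le hxy
    rw [abs_of_pos (by linarith), abs_of_pos (by linarith)]
    exact neg_le_neg (Real.log_le_log (by linarith) (by linarith))
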